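/- arXiv:2205.13905 — 7 statements merged into one kernel-verified Lean document; each statement's English description precedes it below -/
import Mathlib

section
/- For all n ≥ r ≥ 1 and k ≥ r, the Turán numbers satisfy T(n,k,r) ≥ (n/(n−r)) · T(n−1,k,r). -/
noncomputable def turanNumber (n k r : ℕ) : ℕ :=
  sInf {m : ℕ | ∃ S : Finset (Finset (Fin n)),
    (∀ s ∈ S, s.card = r) ∧
    (∀ Y : Finset (Fin n), Y.card = k → ∃ s ∈ S, s ⊆ Y) ∧
    S.card = m}

/-- Katona's inequality `T(n,k,r) ≥ (n/(n−r)) · T(n−1,k,r)`. -/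
theorem stmt_4 (n k r : ℕ) (hr : 1 ≤ r) (hrn : r < n) (hrk : r ≤ k)
    (hk : k ≤ n - 1) :
    ((n : ℚ) / ((n : ℚ) - (r : ℚ))) * (turanNumber (n - 1) k r : ℚ) ≤
      (turanNumber n k r : ℚ) := by
  classical
  obtain ⟨m, rfl⟩ : ∃ m, n = m + 1 := ⟨n - 1, by omega⟩
  simp only [Nat.add_sub_cancel] at hk ⊢
  have hkn : k ≤ m + 1 := by omega
  -- the defining set is nonempty
  have hne : {c : ℕ | ∃ S : Finset (Finset (Fin (m+1))),
      (∀ s ∈ S, s.card = r) ∧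
      (∀ Y : Finset (Fin (m+1)), Y.card = k → ∃ s ∈ S, s ⊆ Y) ∧
      S.card = c}.Nonempty := by
    refine ⟨_, Finset.powersetCard r Finset.univ, ?_, ?_, rfl⟩
    · intro s hs; exact (Finset.mem_powersetCard_univ.1 hs)
    · intro Y hY
      obtain ⟨s, hsY, hsc⟩ := Finset.exists_subset_card_eq (s := Y) (n := r) (by omega)
      exact ⟨s, Finset.mem_powersetCard_univ.2 hsc, hsY⟩
  obtain ⟨S, hScard, hScov, hSval⟩ :
      ∃ S : Finset (Finset (Fin (m+1))),
        (∀ s ∈ S, s.card = r) ∧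
        (∀ Y : Finset (Fin (m+1)), Y.card = k → ∃ s ∈ S, s ⊆ Y) ∧
        S.card = turanNumber (m+1) k r := Nat.sInf_mem hne
  -- key pointwise bound
  have key : ∀ x : Fin (m+1),
      turanNumber m k r ≤ (S.filter (fun s => x ∉ s)).card := by
    intro x
    set F : Fin m ↪ Fin (m+1) := x.succAboveEmb with hF
    have hFr : Set.range (F : Fin m → Fin (m+1)) = {x}ᶜ := by
      simpa [hF] using Fin.range_succAbove x
    have hsub : ∀ s : Finset (Fin (m+1)), x ∉ s →
        ∀ y ∈ s, y ∈ Set.range (F : Fin m → Fin (m+1)) := by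
      intro s hx y hy
      rw [hFr]
      intro h
      exact hx (by simpa [Set.mem_singleton_iff.1 h] using hy)
    apply Nat.sInf_le
    refine ⟨(S.filter (fun s => x ∉ s)).image
      (fun s => s.preimage F F.injective.injOn), ?_, ?_, ?_⟩
    · intro s' hs'
      obtain ⟨s, hs, rfl⟩ := Finset.mem_image.1 hs'
      obtain ⟨hsS, hxs⟩ := Finset.mem_filter.1 hs
      rw [Finset.card_preimage]
      rw [show {y ∈ s | y ∈ Set.range (F : Fin m → Fin (m+1))} = s from
        Finset.filter_true_of_mem (hsub s hxs)]
      exact hScard s hsS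
    · intro Y hY
      obtain ⟨s, hsS, hsY⟩ := hScov (Y.map F) (by simpa using hY)
      have hxs : x ∉ s := by
        intro hx
        have := hsY hx
        obtain ⟨y, _, hy⟩ := Finset.mem_map.1 this
        have : x ∈ Set.range (F : Fin m → Fin (m+1)) := ⟨y, hy⟩
        rw [hFr] at this; exact this rfl
      refine ⟨s.preimage F F.injective.injOn,
        Finset.mem_image.2 ⟨s, Finset.mem_filter.2 ⟨hsS, hxs⟩, rfl⟩,
        Finset.preimage_subset hsY⟩
    · apply Finset.card_image_of_injOn
      intro s hs t ht hst
      obtain ⟨hsS, hxs⟩ := Finset.mem_filter.1 hs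
      obtain ⟨htS, hxt⟩ := Finset.mem_filter.1 ht
      have h1 := Finset.image_preimage (F : Fin m → Fin (m+1)) s F.injective.injOn
      have h2 := Finset.image_preimage (F : Fin m → Fin (m+1)) t F.injective.injOn
      rw [Finset.filter_true_of_mem (hsub s hxs)] at h1
      rw [Finset.filter_true_of_mem (hsub t hxt)] at h2
      rw [← h1, ← h2]
      exact congrArg _ hst
  -- double counting
  have hcount : ∑ x : Fin (m+1), (S.filter (fun s => x ∉ s)).card
      = S.card * (m + 1 - r) := by
    have : ∀ x : Fin (m+1), (S.filter (fun s => x ∉ s)).card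
        = ∑ s ∈ S, if x ∉ s then 1 else 0 := by
      intro x; simp [Finset.sum_ite_eq, Finset.card_filter]
    rw [Finset.sum_congr rfl (fun x _ => this x), Finset.sum_comm]
    rw [Finset.sum_congr rfl (fun s hs => ?_), Finset.sum_const, smul_eq_mul]
    have hfc : Finset.filter (fun x => x ∉ s) Finset.univ = sᶜ := by
      ext y; simp
    have : ∑ x : Fin (m+1), (if x ∉ s then 1 else 0) = (sᶜ).card := by
      rw [← hfc, Finset.card_filter]
    rw [this, Finset.card_compl, hScard s hs]
    simp
  have hmain : (m + 1) * turanNumber m k r ≤ (m + 1 - r) * turanNumber (m+1) k r := by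
    calc (m + 1) * turanNumber m k r
        = ∑ _x : Fin (m+1), turanNumber m k r := by
          simp [Finset.sum_const, mul_comm]
      _ ≤ ∑ x : Fin (m+1), (S.filter (fun s => x ∉ s)).card :=
          Finset.sum_le_sum (fun x _ => key x)
      _ = S.card * (m + 1 - r) := hcount
      _ = (m + 1 - r) * turanNumber (m+1) k r := by rw [hSval, mul_comm]
  -- pass to ℚ
  have hpos : (0 : ℚ) < ((m : ℚ) + 1) - r := by
    have : (r : ℚ) < (m : ℚ) + 1 := by exact_mod_cast hrn
    linarith
  have hQ : ((m : ℚ) + 1) * turanNumber m k r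
      ≤ (((m : ℚ) + 1) - r) * turanNumber (m+1) k r := by
    have h1 : (((m + 1) * turanNumber m k r : ℕ) : ℚ)
        ≤ (((m + 1 - r) * turanNumber (m+1) k r : ℕ) : ℚ) := Nat.cast_le.2 hmain
    push_cast [Nat.cast_sub (show r ≤ m + 1 by omega)] at h1
    linarith
  push_cast
  rw [div_mul_eq_mul_div, div_le_iff₀ hpos]
  nlinarith [hQ]
end

section
/- For every odd n and every even integer d with 0 ≤ d ≤ n−1 and d ≠ (n−1)/2, there exists a d-regular graph on n vertices that contains no induced 5-cycle. -/
def HasInducedC5 {V : Type*} (G : SimpleGraph V) : Prop :=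
  ∃ f : Fin 5 ↪ V, ∀ i j, G.Adj (f i) (f j) ↔ (SimpleGraph.cycleGraph 5).Adj i j

noncomputable def deg {V : Type*} (G : SimpleGraph V) (v : V) : ℕ :=
  Nat.card (G.neighborSet v)

namespace C5Aux

open SimpleGraph

variable {V W α β : Type*}

/-- Disjoint union of two simple graphs. -/
def du (G : SimpleGraph α) (H : SimpleGraph β) : SimpleGraph (α ⊕ β) where
  Adj u v := match u, v with
    | .inl a, .inl b => G.Adj a b
    | .inr a, .inr b => H.Adj a b
    | _, _ => False
  symm := ⟨by rintro (a | a) (b | b) h <;>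
    first | exact G.adj_symm h | exact H.adj_symm h | exact h.elim⟩
  loopless := ⟨by rintro (a | a) h <;> first | exact G.irrefl h | exact H.irrefl h⟩

lemma deg_du_inl (G : SimpleGraph α) (H : SimpleGraph β) (a : α) :
    deg (du G H) (Sum.inl a) = deg G a := by
  apply Nat.card_congr
  refine (Equiv.ofBijective (fun x : G.neighborSet a => (⟨Sum.inl x.1, x.2⟩ :
    (du G H).neighborSet (Sum.inl a))) ⟨?_, ?_⟩).symm
  · intro x y h
    exact Subtype.ext (Sum.inl_injective (congrArg Subtype.val h))
  · rintro ⟨(b | b), hb⟩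
    · exact ⟨⟨b, hb⟩, rfl⟩
    · exact hb.elim

lemma deg_du_inr (G : SimpleGraph α) (H : SimpleGraph β) (b : β) :
    deg (du G H) (Sum.inr b) = deg H b := by
  apply Nat.card_congr
  refine (Equiv.ofBijective (fun x : H.neighborSet b => (⟨Sum.inr x.1, x.2⟩ :
    (du G H).neighborSet (Sum.inr b))) ⟨?_, ?_⟩).symm
  · intro x y h
    exact Subtype.ext (Sum.inr_injective (congrArg Subtype.val h))
  · rintro ⟨(c | c), hc⟩
    · exact hc.elim
    · exact ⟨⟨c, hc⟩, rfl⟩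

lemma c5_adj_01 : (cycleGraph 5).Adj 0 1 := by decide
lemma c5_adj_12 : (cycleGraph 5).Adj 1 2 := by decide
lemma c5_adj_34 : (cycleGraph 5).Adj 3 4 := by decide
lemma c5_adj_04 : (cycleGraph 5).Adj 0 4 := by decide
lemma c5_adj_23 : (cycleGraph 5).Adj 2 3 := by decide
lemma c5_nadj_02 : ¬ (cycleGraph 5).Adj 0 2 := by decide
lemma c5_nadj_24 : ¬ (cycleGraph 5).Adj 2 4 := by decide

lemma c5_du (G : SimpleGraph α) (H : SimpleGraph β)
    (hG : ¬ HasInducedC5 G) (hH : ¬ HasInducedC5 H) : ¬ HasInducedC5 (du G H) := by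
  rintro ⟨f, hf⟩
  have key : ∀ i j, (cycleGraph 5).Adj i j → (f i).isLeft = (f j).isLeft := by
    intro i j h
    have := (hf i j).2 h
    rcases hx : f i with a | a <;> rcases hy : f j with b | b <;>
      rw [hx, hy] at this <;> first | rfl | exact this.elim
  have c : ∀ i, (f i).isLeft = (f 0).isLeft := by
    have h01 := key 0 1 c5_adj_01
    have h12 := key 1 2 c5_adj_12
    have h23 := key 2 3 c5_adj_23
    have h34 := key 3 4 c5_adj_34
    have h04 := key 0 4 c5_adj_04
    intro i
    fin_cases i
    · rfl
    · exact h01.symm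
    · exact (h01.trans h12).symm
    · exact (h04.trans h34.symm).symm
    · exact h04.symm
  cases hL : (f 0).isLeft with
  | true =>
    have hex : ∀ i, ∃ a, f i = Sum.inl a := by
      intro i
      exact Sum.isLeft_iff.mp ((c i).trans hL)
    choose g hg using hex
    apply hG
    refine ⟨⟨g, fun i j h => f.injective (by rw [hg i, hg j, h])⟩, fun i j => ?_⟩
    have := hf i j
    rw [hg i, hg j] at this
    exact this
  | false =>
    have hex : ∀ i, ∃ a, f i = Sum.inr a := by
      intro i
      have hfi : (f i).isLeft = false := (c i).trans hL
      rcases hx : f i with a | a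
      · rw [hx] at hfi; exact absurd hfi (by simp)
      · exact ⟨a, rfl⟩
    choose g hg using hex
    apply hH
    refine ⟨⟨g, fun i j h => f.injective (by rw [hg i, hg j, h])⟩, fun i j => ?_⟩
    have := hf i j
    rw [hg i, hg j] at this
    exact this


lemma deg_bot (v : V) : deg (⊥ : SimpleGraph V) v = 0 := by
  have : (⊥ : SimpleGraph V).neighborSet v = ∅ := by ext w; simp
  rw [deg, this]
  simp

lemma c5_bot : ¬ HasInducedC5 (⊥ : SimpleGraph V) := by
  rintro ⟨f, hf⟩
  exact (hf 0 1).2 (by decide)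

lemma deg_compl [Fintype V] (G : SimpleGraph V) (v : V) :
    deg Gᶜ v + deg G v + 1 = Fintype.card V := by
  have h1 : Gᶜ.neighborSet v = (G.neighborSet v)ᶜ \ {v} := G.neighborSet_compl v
  have hv : v ∈ (G.neighborSet v)ᶜ := by simp
  have h2 : ((G.neighborSet v)ᶜ \ {v}).ncard + 1 = ((G.neighborSet v)ᶜ).ncard :=
    Set.ncard_diff_singleton_add_one hv
  have h3 : (G.neighborSet v).ncard + ((G.neighborSet v)ᶜ).ncard = Nat.card V :=
    Set.ncard_add_ncard_compl _
  rw [deg, deg, h1, Nat.card_coe_set_eq, Nat.card_coe_set_eq]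
  rw [Nat.card_eq_fintype_card] at h3
  omega

lemma c5_compl (G : SimpleGraph V) (h : HasInducedC5 Gᶜ) : HasInducedC5 G := by
  obtain ⟨f, hf⟩ := h
  have m : Fin 5 ↪ Fin 5 := ⟨fun i => 2 * i, by decide⟩
  refine ⟨(⟨fun i => 2 * i, by decide⟩ : Fin 5 ↪ Fin 5).trans f, fun i j => ?_⟩
  have key : ∀ i j : Fin 5, ((2 * i : Fin 5) ≠ 2 * j ∧ ¬ (cycleGraph 5).Adj (2 * i) (2 * j))
      ↔ (cycleGraph 5).Adj i j := by decide
  have hGadj : ∀ a b : V, G.Adj a b ↔ (a ≠ b ∧ ¬ Gᶜ.Adj a b) := by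
    intro a b
    rw [compl_adj]
    constructor
    · intro h; exact ⟨h.ne, fun hc => hc.2 h⟩
    · intro h
      by_contra hc
      exact (h.2 ⟨h.1, hc⟩)
  simp only [Function.Embedding.trans_apply, Function.Embedding.coeFn_mk]
  rw [hGadj, hf, f.injective.ne_iff]
  exact key i j

/-- Cocktail-party-like: complete multipartite with parts of size 2. -/
def cp (m : ℕ) : SimpleGraph (Fin m × Fin 2) where
  Adj u v := u.1 ≠ v.1
  symm := ⟨fun u v h => Ne.symm h⟩
  loopless := ⟨fun u h => h rfl⟩

lemma deg_cp (m : ℕ) (v : Fin m × Fin 2) : deg (cp m) v = (m - 1) * 2 := by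
  have e : (cp m).neighborSet v ≃ {a : Fin m // v.1 ≠ a} × Fin 2 :=
    { toFun := fun x => (⟨x.1.1, x.2⟩, x.1.2)
      invFun := fun x => ⟨(x.1.1, x.2), x.1.2⟩
      left_inv := fun x => rfl
      right_inv := fun x => rfl }
  rw [deg, Nat.card_congr e, Nat.card_eq_fintype_card, Fintype.card_prod, Fintype.card_fin]
  congr 1
  rw [Fintype.card_subtype_compl, Fintype.card_subtype_eq', Fintype.card_fin]

lemma c5_cp (m : ℕ) : ¬ HasInducedC5 (cp m) := by
  rintro ⟨f, hf⟩
  have h02 : (f 0).1 = (f 2).1 := by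
    by_contra h
    exact (by decide : ¬ (cycleGraph 5).Adj 0 2) ((hf 0 2).1 h)
  have h24 : (f 2).1 = (f 4).1 := by
    by_contra h
    exact (by decide : ¬ (cycleGraph 5).Adj 2 4) ((hf 2 4).1 h)
  exact ((hf 0 4).2 (by decide)) (h02.trans h24)


/-- `d`-regular bipartite circulant on `ZMod m × Fin 2` (needs `d ≤ m`). -/
def bip (m d : ℕ) : SimpleGraph (ZMod m × Fin 2) where
  Adj u v := (u.2 = 0 ∧ v.2 = 1 ∧ (v.1 - u.1).val < d) ∨
             (u.2 = 1 ∧ v.2 = 0 ∧ (u.1 - v.1).val < d)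
  symm := ⟨by
    rintro u v (⟨h1, h2, h3⟩ | ⟨h1, h2, h3⟩)
    · exact Or.inr ⟨h2, h1, h3⟩
    · exact Or.inl ⟨h2, h1, h3⟩⟩
  loopless := ⟨by
    rintro u (⟨h1, h2, _⟩ | ⟨h1, h2, _⟩) <;> rw [h1] at h2 <;> exact absurd h2 (by decide)⟩

lemma bip_adj_zero (m d : ℕ) (a : ZMod m) (u : ZMod m × Fin 2) :
    (bip m d).Adj (a, 0) u ↔ u.2 = 1 ∧ (u.1 - a).val < d := by
  constructor
  · rintro (⟨_, h2, h3⟩ | ⟨h1, _, _⟩)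
    · exact ⟨h2, h3⟩
    · exact absurd h1 (zero_ne_one : (0 : Fin 2) ≠ 1)
  · rintro ⟨h2, h3⟩
    exact Or.inl ⟨rfl, h2, h3⟩

lemma bip_adj_one (m d : ℕ) (a : ZMod m) (u : ZMod m × Fin 2) :
    (bip m d).Adj (a, 1) u ↔ u.2 = 0 ∧ (a - u.1).val < d := by
  constructor
  · rintro (⟨h1, _, _⟩ | ⟨_, h2, h3⟩)
    · exact absurd h1 (one_ne_zero : (1 : Fin 2) ≠ 0)
    · exact ⟨h2, h3⟩
  · rintro ⟨h2, h3⟩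
    exact Or.inr ⟨rfl, h2, h3⟩

lemma zmod_aux {m : ℕ} [NeZero m] (x : ZMod m) : ((x.val : ZMod m)) = x := by
  rw [ZMod.natCast_val, ZMod.cast_id]

lemma deg_bip (m d : ℕ) [NeZero m] (hdm : d ≤ m) (v : ZMod m × Fin 2) :
    deg (bip m d) v = d := by
  obtain ⟨a, t⟩ := v
  fin_cases t
  · show deg (bip m d) (a, 0) = d
    have e : (bip m d).neighborSet (a, 0) ≃ Fin d :=
      { toFun := fun x => ⟨(x.1.1 - a).val, ((bip_adj_zero m d a x.1).1 x.2).2⟩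
        invFun := fun j => ⟨(a + (j : ZMod m), 1), (bip_adj_zero m d a _).2
          ⟨rfl, by simp only [add_sub_cancel_left]; rw [ZMod.val_natCast_of_lt (lt_of_lt_of_le j.2 hdm)]; exact j.2⟩⟩
        left_inv := by
          rintro ⟨⟨b, s⟩, hb⟩
          have h := (bip_adj_zero m d a _).1 hb
          apply Subtype.ext
          simp only [Prod.mk.injEq]
          constructor
          · rw [zmod_aux]; ring
          · exact h.1.symm
        right_inv := by
          intro j
          apply Fin.ext
          simp only [add_sub_cancel_left]
          exact ZMod.val_natCast_of_lt (lt_of_lt_of_le j.2 hdm) }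
    rw [deg, Nat.card_congr e, Nat.card_eq_fintype_card, Fintype.card_fin]
  · show deg (bip m d) (a, 1) = d
    have e : (bip m d).neighborSet (a, 1) ≃ Fin d :=
      { toFun := fun x => ⟨(a - x.1.1).val, ((bip_adj_one m d a x.1).1 x.2).2⟩
        invFun := fun j => ⟨(a - (j : ZMod m), 0), (bip_adj_one m d a _).2
          ⟨rfl, by simp only [sub_sub_cancel]; rw [ZMod.val_natCast_of_lt (lt_of_lt_of_le j.2 hdm)]; exact j.2⟩⟩
        left_inv := by
          rintro ⟨⟨b, s⟩, hb⟩
          have h := (bip_adj_one m d a _).1 hb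
          apply Subtype.ext
          simp only [Prod.mk.injEq]
          constructor
          · rw [zmod_aux]; ring
          · exact h.1.symm
        right_inv := by
          intro j
          apply Fin.ext
          simp only [sub_sub_cancel]
          exact ZMod.val_natCast_of_lt (lt_of_lt_of_le j.2 hdm) }
    rw [deg, Nat.card_congr e, Nat.card_eq_fintype_card, Fintype.card_fin]

lemma bip_adj_ne (m d : ℕ) {u v : ZMod m × Fin 2} (h : (bip m d).Adj u v) : u.2 ≠ v.2 := by
  rcases h with ⟨h1, h2, _⟩ | ⟨h1, h2, _⟩ <;> rw [h1, h2] <;> decide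

lemma c5_bip (m d : ℕ) : ¬ HasInducedC5 (bip m d) := by
  rintro ⟨f, hf⟩
  have tri : ∀ a b c : Fin 2, a ≠ b → b ≠ c → a = c := by decide
  have h01 := bip_adj_ne m d ((hf 0 1).2 (by decide))
  have h12 := bip_adj_ne m d ((hf 1 2).2 (by decide))
  have h23 := bip_adj_ne m d ((hf 2 3).2 (by decide))
  have h34 := bip_adj_ne m d ((hf 3 4).2 (by decide))
  have h04 := bip_adj_ne m d ((hf 0 4).2 (by decide))
  have e02 : (f 0).2 = (f 2).2 := tri _ _ _ h01 h12
  have e24 : (f 2).2 = (f 4).2 := tri _ _ _ h23 h34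
  exact h04 (e02.trans e24)

lemma deg_comap (e : α ≃ β) (G : SimpleGraph β) (v : α) :
    deg (G.comap e) v = deg G (e v) :=
  Nat.card_congr (Equiv.subtypeEquiv e (fun _ => Iff.rfl))

lemma c5_comap (e : α ≃ β) (G : SimpleGraph β) (h : HasInducedC5 (G.comap e)) :
    HasInducedC5 G := by
  obtain ⟨f, hf⟩ := h
  exact ⟨f.trans e.toEmbedding, hf⟩

lemma main : ∀ d n : ℕ, d % 2 = 0 → n % 2 = 1 → (d = 0 ∨ 2*d+3 ≤ n) →
    ∃ G : SimpleGraph (Fin n), (∀ v, deg G v = d) ∧ ¬ HasInducedC5 G := by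
  intro d
  induction d using Nat.strong_induction_on with
  | _ d IH =>
    intro n hd hn hcase
    rcases Nat.eq_zero_or_pos d with rfl | hdpos
    · exact ⟨⊥, fun v => deg_bot v, c5_bot⟩
    have h2d3 : 2*d+3 ≤ n := by rcases hcase with rfl | h <;> omega
    by_cases hbig : 3*d+1 ≤ n
    · -- `K_{d+1} ⊔ bip m d`
      have hm2 : ((n - (d+1)) / 2) * 2 = n - (d+1) := by omega
      set m := (n - (d+1)) / 2 with hm
      have hmd : d ≤ m := by omega
      haveI : NeZero m := ⟨by omega⟩
      set G0 := du (⊥ : SimpleGraph (Fin (d+1)))ᶜ (bip m d) with hG0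
      have hcard : Fintype.card (Fin (d+1) ⊕ ZMod m × Fin 2) = n := by
        rw [Fintype.card_sum, Fintype.card_prod, ZMod.card, Fintype.card_fin, Fintype.card_fin]
        omega
      set e := (Fintype.equivFinOfCardEq hcard).symm with he
      refine ⟨G0.comap e, ?_, ?_⟩
      · intro v
        rw [deg_comap e G0 v]
        rcases hv : e v with a | b
        · rw [deg_du_inl]
          have h1 := deg_compl (⊥ : SimpleGraph (Fin (d+1))) a
          have h2 := deg_bot a
          rw [Fintype.card_fin] at h1
          omega
        · rw [deg_du_inr]
          exact deg_bip m d hmd b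
      · intro hC5
        exact c5_du _ _ (fun h => c5_bot (c5_compl _ h)) (c5_bip m d) (c5_comap e G0 hC5)
    · -- `cp ⊔ Hᶜ`
      set N := n - (d+2) with hN
      set w := n - (2*d+3) with hw
      have hw2 : w % 2 = 0 := by omega
      have hN2 : N % 2 = 1 := by omega
      have hwd : w < d := by omega
      have hcasew : w = 0 ∨ 2*w+3 ≤ N := by omega
      obtain ⟨H, hHdeg, hHc5⟩ := IH w hwd N hw2 hN2 hcasew
      have hm22 : ((d+2)/2) * 2 = d + 2 := by omega
      set m2 := (d+2)/2 with hm2def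
      set G0 := du (cp m2) Hᶜ with hG0
      have hcard : Fintype.card ((Fin m2 × Fin 2) ⊕ Fin N) = n := by
        rw [Fintype.card_sum, Fintype.card_prod, Fintype.card_fin, Fintype.card_fin,
          Fintype.card_fin]
        omega
      set e := (Fintype.equivFinOfCardEq hcard).symm with he
      refine ⟨G0.comap e, ?_, ?_⟩
      · intro v
        rw [deg_comap e G0 v]
        rcases hv : e v with a | b
        · rw [deg_du_inl, deg_cp]
          omega
        · rw [deg_du_inr]
          have h1 := deg_compl H b
          have h2 := hHdeg b
          rw [Fintype.card_fin] at h1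
          omega
      · intro hC5
        exact c5_du _ _ (c5_cp m2) (fun h => hHc5 (c5_compl H h)) (c5_comap e G0 hC5)

end C5Aux



/-- For every odd `n` and every even `d` with `0 ≤ d ≤ n−1` and `d ≠ (n−1)/2`,
there is a `d`-regular graph on `n` vertices with no induced 5-cycle. -/
theorem stmt_11 (n d : ℕ) (hn : Odd n) (hd : Even d) (hdn : d ≤ n - 1)
    (hne : d ≠ (n - 1) / 2) :
    ∃ G : SimpleGraph (Fin n), (∀ v, deg G v = d) ∧ ¬ HasInducedC5 G := by
  have hn1 : n % 2 = 1 := Nat.odd_iff.mp hn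
  have hd2 : d % 2 = 0 := Nat.even_iff.mp hd
  by_cases h : 2*d+3 ≤ n
  · exact C5Aux.main d n hd2 hn1 (Or.inr h)
  · have key : 2*(n-1-d)+3 ≤ n := by omega
    have hd' : (n-1-d) % 2 = 0 := by omega
    obtain ⟨H, h1, h2⟩ := C5Aux.main (n-1-d) n hd' hn1 (Or.inr key)
    refine ⟨Hᶜ, fun v => ?_, fun hc => h2 (C5Aux.c5_compl H hc)⟩
    have h3 := C5Aux.deg_compl H v
    have h4 := h1 v
    rw [Fintype.card_fin] at h3
    omega
end

section
/- For every m ≡ 0 (mod 4), there exists an m-regular graph on 2m+1 vertices that contains no induced 5-cycle. -/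
namespace C5FreeAux

def mask : Nat → Nat
  | 0 => 200 | 1 => 164 | 2 => 82 | 3 => 49
  | 4 => 108 | 5 => 154 | 6 => 149 | _ => 99

/-- blob-level edge relation among the 8 size-`r` blobs -/
def eB (i j : Fin 8) : Bool := (mask i.val >>> j.val) &&& 1 == 1

abbrev P : Type := Option (Fin 8)

def padjB : P → P → Bool
  | none, none => false
  | none, some i => decide (i.val < 4)
  | some i, none => decide (i.val < 4)
  | some i, some j => eB i j

theorem hpat_aux : ∀ a b : P, padjB a b = true →
    ∀ c, padjB b c = true → padjB a c = false →
    ∀ d, padjB c d = true → padjB b d = false → padjB a d = false →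
    ∀ e, padjB d e = true → padjB e a = true → padjB c e = false →
      padjB b e ≠ false := by
  decide

lemma padjB_symm : ∀ a b : P, padjB a b = padjB b a := by decide

lemma padjB_irrefl : ∀ a : P, padjB a a = false := by decide

lemma c5_distinguish : ∀ i j : Fin 5, ¬ i = j → ∃ k, k ≠ i ∧ k ≠ j ∧
    ¬ ((SimpleGraph.cycleGraph 5).Adj k i ↔ (SimpleGraph.cycleGraph 5).Adj k j) := by
  decide

/-- no 5 distinct pattern vertices induce a C5 pattern -/
lemma hpat_no_c5 (g : Fin 5 → P)
    (hg : ∀ i j, padjB (g i) (g j) = true ↔ (SimpleGraph.cycleGraph 5).Adj i j) : False := by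
  have adj : ∀ i j : Fin 5, (SimpleGraph.cycleGraph 5).Adj i j →
      padjB (g i) (g j) = true := fun i j h => (hg i j).mpr h
  have nadj : ∀ i j : Fin 5, ¬ (SimpleGraph.cycleGraph 5).Adj i j →
      padjB (g i) (g j) = false := by
    intro i j h
    have := (hg i j).not.mpr h
    exact Bool.not_eq_true _ ▸ (Bool.eq_false_iff.mpr (fun ht => h ((hg i j).mp ht)))
  exact hpat_aux (g 0) (g 1) (adj 0 1 (by decide))
    (g 2) (adj 1 2 (by decide)) (nadj 0 2 (by decide))
    (g 3) (adj 2 3 (by decide)) (nadj 1 3 (by decide)) (nadj 0 3 (by decide))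
    (g 4) (adj 3 4 (by decide)) (adj 4 0 (by decide)) (nadj 2 4 (by decide))
    (nadj 1 4 (by decide))

abbrev V (r : ℕ) : Type := Option (Fin 8 × Fin r)

def vadjB {r : ℕ} : V r → V r → Bool
  | none, none => false
  | none, some (i, _) => decide (i.val < 4)
  | some (i, _), none => decide (i.val < 4)
  | some (i, x), some (j, y) =>
      if i = j then decide (i.val < 4) && decide (x ≠ y) else eB i j

lemma eB_symm : ∀ i j : Fin 8, eB i j = eB j i := by decide

def G' (r : ℕ) : SimpleGraph (V r) where
  Adj a b := vadjB a b = true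
  symm := by
    constructor
    rintro (_ | ⟨i, x⟩) (_ | ⟨j, y⟩) h
    · exact h
    · exact h
    · exact h
    · simp only [vadjB] at *
      by_cases hij : i = j
      · subst hij
        rw [if_pos rfl] at h ⊢
        simp only [Bool.and_eq_true, decide_eq_true_eq] at h ⊢
        exact ⟨h.1, h.2.symm⟩
      · rw [if_neg (Ne.symm hij), eB_symm]
        rwa [if_neg hij] at h
  loopless := by
    constructor
    rintro (_ | ⟨i, x⟩) h
    · simp [vadjB] at h
    · simp [vadjB] at h

instance decAdj (r : ℕ) : DecidableRel (G' r).Adj := fun _ _ => instDecidableEqBool _ _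

def blob {r : ℕ} : V r → P := Option.map Prod.fst

lemma sum_ite_ne (r : ℕ) (x : Fin r) :
    (∑ y : Fin r, if x ≠ y then (1:ℕ) else 0) = r - 1 := by
  rw [← Finset.card_filter, Finset.filter_ne, Finset.card_erase_of_mem (Finset.mem_univ x),
    Finset.card_univ, Fintype.card_fin]

lemma inner_sum (r : ℕ) (i j : Fin 8) (x : Fin r) :
    (∑ y : Fin r, if vadjB (some (i, x)) (some (j, y)) = true then (1:ℕ) else 0)
      = if i = j then (if i.val < 4 then r - 1 else 0)
        else (if eB i j = true then r else 0) := by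
  by_cases hij : i = j
  · subst hij
    rw [if_pos rfl]
    have hv : ∀ y : Fin r, vadjB (some (i, x)) (some (i, y))
        = (decide (i.val < 4) && decide (x ≠ y)) := by
      intro y
      show (if i = i then decide (i.val < 4) && decide (x ≠ y) else eB i i)
          = (decide (i.val < 4) && decide (x ≠ y))
      rw [if_pos rfl]
    by_cases h4 : i.val < 4
    · have hd : decide (i.val < 4) = true := decide_eq_true h4
      have hsummand : ∀ y : Fin r,
          (if vadjB (some (i, x)) (some (i, y)) = true then (1:ℕ) else 0)
            = (if x ≠ y then 1 else 0) := by
        intro y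
        rw [hv y, hd, Bool.true_and]
        by_cases hxy : x = y <;> simp [hxy]
      rw [Finset.sum_congr rfl (fun y _ => hsummand y), sum_ite_ne, if_pos h4]
    · have hd : decide (i.val < 4) = false := by simpa using h4
      have hsummand : ∀ y : Fin r,
          (if vadjB (some (i, x)) (some (i, y)) = true then (1:ℕ) else 0) = 0 := by
        intro y
        rw [hv y, hd, Bool.false_and]
        simp
      rw [Finset.sum_congr rfl (fun y _ => hsummand y), if_neg h4]
      simp
  · simp only [vadjB, if_neg hij]
    rcases h : eB i j <;> simp [h]

theorem deg_G' (r : ℕ) (v : V r) : deg (G' r) v = 4 * r := by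
  have h1 : deg (G' r) v = ((G' r).neighborFinset v).card := by
    rw [deg, Nat.card_eq_fintype_card, SimpleGraph.card_neighborSet_eq_degree]
    rfl
  rw [h1, SimpleGraph.neighborFinset_eq_filter, Finset.card_filter, Fintype.sum_option,
    Fintype.sum_prod_type]
  show ((if vadjB v none = true then 1 else 0) +
    ∑ j : Fin 8, ∑ y : Fin r, if vadjB v (some (j, y)) = true then 1 else 0) = 4 * r
  rcases v with _ | ⟨i, x⟩
  · simp only [show ∀ (j : Fin 8) (y : Fin r), vadjB (none : V r) (some (j, y)) = decide (j.val < 4) from fun _ _ => rfl,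
      show vadjB (none : V r) none = false from rfl]
    have : ∀ j : Fin 8, (∑ _y : Fin r, if (decide (j.val < 4)) = true then (1:ℕ) else 0)
        = if j.val < 4 then r else 0 := by
      intro j; by_cases h : (j : ℕ) < 4 <;> simp [h]
    simp only [this]
    rw [Fin.sum_univ_eight]
    simp +decide
    ring
  · have hr : 0 < r := x.pos
    simp only [inner_sum]
    have hz : (if vadjB (some (i, x)) none = true then (1:ℕ) else 0)
        = if i.val < 4 then 1 else 0 := by
      simp only [vadjB, decide_eq_true_eq]
    rw [hz, Fin.sum_univ_eight]
    fin_cases i <;> simp +decide <;> omega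

theorem noC5_G' (r : ℕ) : ¬ HasInducedC5 (G' r) := by
  rintro ⟨f, hf⟩
  -- blob composed with f is injective and realizes the C5 pattern
  have twins : ∀ u v : V r, u ≠ v → blob u = blob v →
      ∀ w : V r, w ≠ u → w ≠ v → vadjB w u = vadjB w v := by
    rintro (_ | ⟨i, x⟩) (_ | ⟨j, y⟩) huv hb w hwu hwv
    · exact absurd rfl huv
    · simp [blob] at hb
    · simp [blob] at hb
    · simp only [blob, Option.map_some, Option.some.injEq] at hb
      have hij : i = j := hb
      subst hij
      have hxy : x ≠ y := fun h => huv (by rw [h])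
      rcases w with _ | ⟨k, z⟩
      · rfl
      · simp only [vadjB]
        by_cases hki : k = i
        · subst hki
          have hzx : z ≠ x := fun h => hwu (by rw [h])
          have hzy : z ≠ y := fun h => hwv (by rw [h])
          simp [hzx, hzy]
        · rw [if_neg hki, if_neg hki]
  have hinj : Function.Injective (fun i => blob (f i)) := by
    intro i j hij
    by_contra hne
    have hfij : f i ≠ f j := fun h => hne (f.injective h)
    obtain ⟨k, hki, hkj, hk⟩ := c5_distinguish i j hne
    have h1 : vadjB (f k) (f i) = vadjB (f k) (f j) :=
      twins (f i) (f j) hfij hij (f k) (fun h => hki (f.injective h)) (fun h => hkj (f.injective h))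
    apply hk
    rw [← hf k i, ← hf k j]
    show vadjB (f k) (f i) = true ↔ vadjB (f k) (f j) = true
    rw [h1]
  have blob_adj : ∀ u v : V r, blob u ≠ blob v →
      vadjB u v = padjB (blob u) (blob v) := by
    rintro (_ | ⟨i, x⟩) (_ | ⟨j, y⟩) hb
    · rfl
    · rfl
    · rfl
    · have hij : i ≠ j := by
        intro h; apply hb; simp [blob, h]
      simp only [vadjB, blob, Option.map_some, padjB, if_neg hij]
  apply hpat_no_c5 (fun i => blob (f i))
  intro i j
  by_cases hij : i = j
  · subst hij
    constructor
    · intro h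
      rw [padjB_irrefl] at h; exact absurd h (by simp)
    · intro h; exact absurd h (SimpleGraph.irrefl _)
  · have hb : blob (f i) ≠ blob (f j) := fun h => hij (hinj h)
    rw [← blob_adj _ _ hb]
    exact hf i j

end C5FreeAux

open C5FreeAux in
/-- For every `m ≡ 0 (mod 4)`, there is an `m`-regular graph on `2m+1` vertices
with no induced 5-cycle. -/
theorem stmt_12 (m : ℕ) (hm : m % 4 = 0) :
    ∃ G : SimpleGraph (Fin (2 * m + 1)), (∀ v, deg G v = m) ∧ ¬ HasInducedC5 G := by
  obtain ⟨r, rfl⟩ : ∃ r, m = 4 * r := ⟨m / 4, by omega⟩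
  have hcard : Fintype.card (Fin (2 * (4 * r) + 1)) = Fintype.card (V r) := by
    simp [V]
    ring
  let e : Fin (2 * (4 * r) + 1) ≃ V r := Fintype.equivOfCardEq hcard
  refine ⟨(G' r).comap e, fun v => ?_, fun h => ?_⟩
  · have : deg ((G' r).comap e) v = deg (G' r) (e v) := by
      apply Nat.card_congr
      exact Equiv.subtypeEquiv e (fun w => Iff.rfl)
    rw [this, deg_G']
  · obtain ⟨f, hf⟩ := h
    exact noC5_G' r ⟨f.trans e.toEmbedding, fun i j => hf i j⟩
end

section
/- Let G1,…,G9 be pairwise disjoint graphs, none containing an induced 5-cycle, arranged in a 3×3 grid pattern; the grid graph obtained by taking their union and adding all edges between vertices of distinct graphs lying in the same row or same column of the grid contains no induced 5-cycle. -/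
/-- The 3×3 grid graph: vertices are placed at positions `p v` in a 3×3 grid;
`H` is the disjoint union of the nine blocks (its edges stay within blocks),
and additionally any two vertices in distinct blocks sharing a row or a column
are joined. -/
def gridOf {V : Type*} (H : SimpleGraph V) (p : V → Fin 3 × Fin 3) :
    SimpleGraph V where
  Adj u v := H.Adj u v ∨ (p u ≠ p v ∧ ((p u).1 = (p v).1 ∨ (p u).2 = (p v).2))
  symm := by
    constructor
    intro u v h
    rcases h with h | ⟨hne, hrc⟩
    · exact Or.inl h.symm
    · exact Or.inr ⟨hne.symm, hrc.imp Eq.symm Eq.symm⟩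
  loopless := by
    constructor
    intro v h
    rcases h with h | ⟨hne, _⟩
    · exact H.irrefl h
    · exact hne rfl

set_option maxHeartbeats 2000000 in
set_option synthInstance.maxHeartbeats 1000000 in
set_option synthInstance.maxSize 2000 in
set_option maxRecDepth 8000 in
private lemma key4 (a b c d e : Fin 3 × Fin 3) (ha : a = (0, 0))
    (hab : a ≠ b → (a.1 = b.1 ∨ a.2 = b.2))
    (hbc : b ≠ c → (b.1 = c.1 ∨ b.2 = c.2))
    (hcd : c ≠ d → (c.1 = d.1 ∨ c.2 = d.2))
    (hde : d ≠ e → (d.1 = e.1 ∨ d.2 = e.2))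
    (hea : e ≠ a → (e.1 = a.1 ∨ e.2 = a.2))
    (hac : a ≠ c → ¬(a.1 = c.1 ∨ a.2 = c.2))
    (hbd : b ≠ d → ¬(b.1 = d.1 ∨ b.2 = d.2))
    (hce : c ≠ e → ¬(c.1 = e.1 ∨ c.2 = e.2))
    (hda : d ≠ a → ¬(d.1 = a.1 ∨ d.2 = a.2))
    (heb : e ≠ b → ¬(e.1 = b.1 ∨ e.2 = b.2)) :
    a = b ∧ b = c ∧ c = d ∧ d = e := by
  subst ha
  revert hab hbc hcd hde hea hac hbd hce hda heb
  revert b c d e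
  decide

private lemma key5 (a b c d e : Fin 3 × Fin 3)
    (hab : a ≠ b → (a.1 = b.1 ∨ a.2 = b.2))
    (hbc : b ≠ c → (b.1 = c.1 ∨ b.2 = c.2))
    (hcd : c ≠ d → (c.1 = d.1 ∨ c.2 = d.2))
    (hde : d ≠ e → (d.1 = e.1 ∨ d.2 = e.2))
    (hea : e ≠ a → (e.1 = a.1 ∨ e.2 = a.2))
    (hac : a ≠ c → ¬(a.1 = c.1 ∨ a.2 = c.2))
    (hbd : b ≠ d → ¬(b.1 = d.1 ∨ b.2 = d.2))
    (hce : c ≠ e → ¬(c.1 = e.1 ∨ c.2 = e.2))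
    (hda : d ≠ a → ¬(d.1 = a.1 ∨ d.2 = a.2))
    (heb : e ≠ b → ¬(e.1 = b.1 ∨ e.2 = b.2)) :
    a = b ∧ b = c ∧ c = d ∧ d = e := by
  set F : Fin 3 × Fin 3 → Fin 3 × Fin 3 :=
    fun x => (Equiv.swap a.1 0 x.1, Equiv.swap a.2 0 x.2) with hF
  have h1 : ∀ x y : Fin 3 × Fin 3, (F x).1 = (F y).1 ↔ x.1 = y.1 := by
    intro x y; simp [hF, Equiv.apply_eq_iff_eq]
  have h2 : ∀ x y : Fin 3 × Fin 3, (F x).2 = (F y).2 ↔ x.2 = y.2 := by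
    intro x y; simp [hF, Equiv.apply_eq_iff_eq]
  have hFeq : ∀ x y : Fin 3 × Fin 3, F x = F y ↔ x = y := by
    intro x y
    constructor
    · intro h
      have := (h1 x y).mp (congrArg Prod.fst h)
      have := (h2 x y).mp (congrArg Prod.snd h)
      exact Prod.ext ‹x.1 = y.1› ‹x.2 = y.2›
    · intro h; rw [h]
  have hFa : F a = (0, 0) := by
    simp [hF, Equiv.swap_apply_left]
  have := key4 (F a) (F b) (F c) (F d) (F e) hFa
    (by simpa only [Ne, hFeq, h1, h2] using hab)
    (by simpa only [Ne, hFeq, h1, h2] using hbc)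
    (by simpa only [Ne, hFeq, h1, h2] using hcd)
    (by simpa only [Ne, hFeq, h1, h2] using hde)
    (by simpa only [Ne, hFeq, h1, h2] using hea)
    (by simpa only [Ne, hFeq, h1, h2] using hac)
    (by simpa only [Ne, hFeq, h1, h2] using hbd)
    (by simpa only [Ne, hFeq, h1, h2] using hce)
    (by simpa only [Ne, hFeq, h1, h2] using hda)
    (by simpa only [Ne, hFeq, h1, h2] using heb)
  simpa only [hFeq] using this

/-- If none of the nine blocks contains an induced 5-cycle, the 3×3 grid graph
contains no induced 5-cycle. -/
theorem stmt_13 {V : Type*} (H : SimpleGraph V) (p : V → Fin 3 × Fin 3)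
    (hblock : ∀ u v, H.Adj u v → p u = p v)
    (hH : ¬ HasInducedC5 H) :
    ¬ HasInducedC5 (gridOf H p) := by
  rintro ⟨f, hf⟩
  set q : Fin 5 → Fin 3 × Fin 3 := fun i => p (f i) with hqdef
  have hq : ∀ i j, q i ≠ q j →
      (((q i).1 = (q j).1 ∨ (q i).2 = (q j).2) ↔ (SimpleGraph.cycleGraph 5).Adj i j) := by
    intro i j hne
    constructor
    · intro h; exact (hf i j).mp (Or.inr ⟨hne, h⟩)
    · intro h
      rcases (hf i j).mpr h with hH' | ⟨_, h'⟩
      · exact absurd (hblock _ _ hH') hne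
      · exact h'
  have hE : ∀ i j : Fin 5, (SimpleGraph.cycleGraph 5).Adj i j →
      q i ≠ q j → ((q i).1 = (q j).1 ∨ (q i).2 = (q j).2) :=
    fun i j ha hne => (hq i j hne).mpr ha
  have hN : ∀ i j : Fin 5, ¬ (SimpleGraph.cycleGraph 5).Adj i j →
      q i ≠ q j → ¬((q i).1 = (q j).1 ∨ (q i).2 = (q j).2) :=
    fun i j ha hne h => ha ((hq i j hne).mp h)
  obtain ⟨e1, e2, e3, e4⟩ := key5 (q 0) (q 1) (q 2) (q 3) (q 4)
    (hE 0 1 (by decide)) (hE 1 2 (by decide)) (hE 2 3 (by decide))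
    (hE 3 4 (by decide)) (hE 4 0 (by decide))
    (hN 0 2 (by decide)) (hN 1 3 (by decide)) (hN 2 4 (by decide))
    (hN 3 0 (by decide)) (hN 4 1 (by decide))
  have hconst : ∀ i j : Fin 5, q i = q j := by
    intro i j
    fin_cases i <;> fin_cases j <;> simp_all
  refine hH ⟨f, fun i j => ?_⟩
  constructor
  · intro h; exact (hf i j).mp (Or.inl h)
  · intro h
    rcases (hf i j).mpr h with h' | ⟨hne, _⟩
    · exact h'
    · exact absurd (hconst i j) hne
end

section
/- For every m ≡ 2 (mod 6) with m = 6r − 2 and r ≥ 2, the 3×3 grid graph with first row consisting of three empty graphs on 2r−1 vertices and remaining six blocks being (r−1)-regular graphs on r vertices (each block with no induced 5-cycle) is an m-regular graph on 2m+1 = 12r−3 vertices with no induced 5-cycle. -/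
/- Auxiliary material -/

abbrev GPos := Fin 3 × Fin 3

def eOK (x y : GPos) : Prop := x = y ∨ (x ≠ y ∧ (x.1 = y.1 ∨ x.2 = y.2))
def nOK (x y : GPos) : Prop := x = y ∨ (x.1 ≠ y.1 ∧ x.2 ≠ y.2)
instance (x y : GPos) : Decidable (eOK x y) := by unfold eOK; infer_instance
instance (x y : GPos) : Decidable (nOK x y) := by unfold nOK; infer_instance

set_option maxHeartbeats 4000000 in
set_option synthInstance.maxHeartbeats 2000000 in
set_option synthInstance.maxSize 2048 in
lemma key : ∀ a b c d e : GPos, eOK a b → eOK b c → eOK c d → eOK d e → eOK e a →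
    nOK a c → nOK a d → nOK b d → nOK b e → nOK c e →
    a = b ∧ b = c ∧ c = d ∧ d = e := by decide

/-- For `m = 6r−2` with `r ≥ 2`, the 3×3 grid graph whose first row consists of
empty blocks on `2r−1` vertices and whose other six blocks are `(r−1)`-regular
graphs on `r` vertices, with no block containing an induced 5-cycle, is an
`m`-regular graph on `2m+1 = 12r−3` vertices with no induced 5-cycle. -/
theorem stmt_15 {V : Type*} [Fintype V] (r : ℕ) (hr : 2 ≤ r)
    (H : SimpleGraph V) (p : V → Fin 3 × Fin 3)
    (hblock : ∀ u v, H.Adj u v → p u = p v)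
    (hsize : ∀ q : Fin 3 × Fin 3,
      Nat.card {v : V // p v = q} = if q.1 = 0 then 2 * r - 1 else r)
    (hdeg : ∀ v, deg H v = if (p v).1 = 0 then 0 else r - 1)
    (hH : ¬ HasInducedC5 H) :
    (∀ v, deg (gridOf H p) v = 6 * r - 2) ∧
    Fintype.card V = 12 * r - 3 ∧
    ¬ HasInducedC5 (gridOf H p) := by
  classical
  have hfiber : ∀ q : GPos, (Finset.univ.filter fun v : V => p v = q).card =
      (if q.1 = 0 then 2 * r - 1 else r) := by
    intro q
    rw [← Fintype.card_subtype, ← Nat.card_eq_fintype_card, hsize q]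
  refine ⟨?_, ?_, ?_⟩
  · -- degrees
    intro v
    obtain ⟨⟨a, b⟩, hab⟩ : ∃ q, p v = q := ⟨p v, rfl⟩
    set condQ : GPos → Prop := fun q => (a, b) ≠ q ∧ (a = q.1 ∨ b = q.2) with hcondQ
    have hns : (gridOf H p).neighborSet v =
        H.neighborSet v ∪ {u | condQ (p u)} := by
      ext u
      simp only [SimpleGraph.mem_neighborSet, Set.mem_union, Set.mem_setOf_eq, gridOf, hcondQ,
        hab]
    have hdisj : Disjoint (H.neighborSet v) {u | condQ (p u)} := by
      rw [Set.disjoint_left]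
      intro u hu hu'
      have := hblock v u hu
      exact hu'.1 (hab.symm.trans this)
    have hcard : deg (gridOf H p) v = deg H v + ({u | condQ (p u)} : Set V).ncard := by
      unfold deg
      rw [hns, Nat.card_coe_set_eq, Set.ncard_union_eq hdisj (Set.toFinite _)
        (Set.toFinite _), Nat.card_coe_set_eq]
    have hB : ({u | condQ (p u)} : Set V).ncard =
        ∑ q ∈ Finset.univ.filter condQ, (if q.1 = 0 then 2 * r - 1 else r) := by
      rw [Set.ncard_eq_toFinset_card', Set.toFinset_setOf]
      rw [Finset.card_eq_sum_card_fiberwise (f := p) (t := Finset.univ.filter condQ)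
        (by intro u hu; simp only [Finset.mem_coe, Finset.mem_filter, Finset.mem_univ, true_and] at hu ⊢
            exact hu)]
      refine Finset.sum_congr rfl ?_
      intro q hq
      simp only [Finset.mem_filter, Finset.mem_univ, true_and] at hq
      rw [← hfiber q]
      congr 1
      ext u
      simp only [Finset.mem_filter, Finset.mem_univ, true_and]
      constructor
      · rintro ⟨_, h⟩; exact h
      · intro h; exact ⟨by rw [h]; exact hq, h⟩
    have hsum : ∑ q ∈ Finset.univ.filter condQ, (if q.1 = 0 then 2 * r - 1 else r) =
        (if a = 0 then 2 * (2 * r - 1) + 2 * r else 2 * r - 1 + 3 * r) := by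
      rw [Finset.sum_filter]
      rw [Fintype.sum_prod_type]
      fin_cases a <;> fin_cases b <;>
        simp [hcondQ, Fin.sum_univ_three, Prod.ext_iff] <;> omega
    rw [hcard, hB, hsum, hdeg v, hab]
    by_cases ha : a = 0 <;> simp [ha] <;> omega
  · -- cardinality
    have : Fintype.card V = ∑ q : GPos, (if q.1 = 0 then 2 * r - 1 else r) := by
      rw [← Finset.card_univ,
        Finset.card_eq_sum_card_fiberwise (f := p) (t := Finset.univ)
          (fun v _ => Finset.mem_univ _)]
      exact Finset.sum_congr rfl fun q _ => hfiber q
    rw [this, Fintype.sum_prod_type]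
    simp only [Fin.sum_univ_three, show ((0:Fin 3) = 0) ↔ True from by decide,
      show ((1:Fin 3) = 0) ↔ False from by decide,
      show ((2:Fin 3) = 0) ↔ False from by decide, if_true, if_false]
    omega
  · -- no induced C5
    rintro ⟨f, hf⟩
    have hadj : ∀ i j : Fin 5, (SimpleGraph.cycleGraph 5).Adj i j →
        eOK (p (f i)) (p (f j)) := by
      intro i j h
      have := (hf i j).2 h
      rcases this with h' | h'
      · exact Or.inl (hblock _ _ h')
      · exact Or.inr h'
    have hnon : ∀ i j : Fin 5, ¬(SimpleGraph.cycleGraph 5).Adj i j →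
        nOK (p (f i)) (p (f j)) := by
      intro i j h
      have hno : ¬ (gridOf H p).Adj (f i) (f j) := fun h' => h ((hf i j).1 h')
      by_cases he : p (f i) = p (f j)
      · exact Or.inl he
      · refine Or.inr ⟨fun hc => ?_, fun hc => ?_⟩
        · exact hno (Or.inr ⟨he, Or.inl hc⟩)
        · exact hno (Or.inr ⟨he, Or.inr hc⟩)
    have hkey := key (p (f 0)) (p (f 1)) (p (f 2)) (p (f 3)) (p (f 4))
      (hadj 0 1 (by decide)) (hadj 1 2 (by decide)) (hadj 2 3 (by decide))
      (hadj 3 4 (by decide)) (hadj 4 0 (by decide))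
      (hnon 0 2 (by decide)) (hnon 0 3 (by decide)) (hnon 1 3 (by decide))
      (hnon 1 4 (by decide)) (hnon 2 4 (by decide))
    obtain ⟨h01, h12, h23, h34⟩ := hkey
    have hconst : ∀ i : Fin 5, p (f i) = p (f 0) := by
      intro i
      fin_cases i
      · rfl
      · exact h01.symm
      · exact (h01.trans h12).symm
      · exact ((h01.trans h12).trans h23).symm
      · exact (((h01.trans h12).trans h23).trans h34).symm
    apply hH
    refine ⟨f, fun i j => ?_⟩
    rw [← hf i j]
    constructor
    · intro h; exact Or.inl h
    · rintro (h | ⟨hne, _⟩)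
      · exact h
      · exact absurd ((hconst i).trans (hconst j).symm) hne
end

section
/- For every n ≡ 3 (mod 4) and every odd d with 1 ≤ d ≤ n−1 and d ≠ (n−1)/2, there exists an n-vertex graph with no induced 5-cycle in which every vertex has degree d except one vertex of degree d+1 or d−1 (an almost d-regular graph). -/
open SimpleGraph


lemma noC5_bot {V : Type*} : ¬ HasInducedC5 (⊥ : SimpleGraph V) := by
  rintro ⟨f, hf⟩
  have := (hf 0 1).mpr (by decide)
  exact this

lemma noC5_compl {V : Type*} {G : SimpleGraph V} (h : ¬ HasInducedC5 G) :
    ¬ HasInducedC5 Gᶜ := by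
  rintro ⟨f, hf⟩
  apply h
  refine ⟨(⟨fun i => 2*i, by decide⟩ : Fin 5 ↪ Fin 5).trans f, ?_⟩
  have hkey : ∀ i j : Fin 5, i ≠ j → ((cycleGraph 5).Adj i j ↔ ¬(cycleGraph 5).Adj (2*i) (2*j)) := by decide
  intro i j
  simp only [Function.Embedding.trans_apply, Function.Embedding.coeFn_mk]
  by_cases hij : i = j
  · subst hij; simp
  · have h2 : (2*i : Fin 5) ≠ 2*j := by
      intro h; apply hij; revert h; revert i j; decide
    have hfne : f (2*i) ≠ f (2*j) := fun h => h2 (f.injective h)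
    have := hf (2*i) (2*j)
    rw [compl_adj] at this
    have hnot : ¬ G.Adj (f (2*i)) (f (2*j)) ↔ (cycleGraph 5).Adj (2*i) (2*j) := by
      constructor
      · intro hn; exact this.mp ⟨hfne, hn⟩
      · intro hc; exact (this.mpr hc).2
    rw [hkey i j hij, ← hnot, not_not]

lemma noC5_sum {V W : Type*} {G : SimpleGraph V} {H : SimpleGraph W}
    (hG : ¬ HasInducedC5 G) (hH : ¬ HasInducedC5 H) : ¬ HasInducedC5 (G ⊕g H) := by
  rintro ⟨f, hf⟩
  -- adjacency facts along the cycle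
  have h01 := (hf 0 1).mpr (by decide)
  have h12 := (hf 1 2).mpr (by decide)
  have h23 := (hf 2 3).mpr (by decide)
  have h34 := (hf 3 4).mpr (by decide)
  have hside : ∀ i j : Fin 5, (G ⊕g H).Adj (f i) (f j) → (f i).isLeft = (f j).isLeft := by
    intro i j h
    cases hi : f i <;> cases hj : f j <;> rw [hi, hj] at h <;> simp_all [SimpleGraph.sum_adj]
  have e01 := hside 0 1 h01
  have e12 := hside 1 2 h12
  have e23 := hside 2 3 h23
  have e34 := hside 3 4 h34
  have hall : ∀ i : Fin 5, (f i).isLeft = (f 0).isLeft := by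
    intro i; fin_cases i <;> simp_all
  cases h0 : f 0 with
  | inl a =>
    have hex : ∀ i : Fin 5, ∃ a, f i = Sum.inl a := by
      intro i
      have := hall i
      rw [h0] at this
      cases hfi : f i
      · exact ⟨_, rfl⟩
      · rw [hfi] at this; simp at this
    choose g hg using hex
    apply hG
    refine ⟨⟨g, fun i j hij => f.injective (by rw [hg i, hg j, hij])⟩, ?_⟩
    intro i j
    have := hf i j
    rw [hg i, hg j] at this
    exact (by simpa [SimpleGraph.sum_adj] using this : G.Adj (g i) (g j) ↔ _)
  | inr a =>
    have hex : ∀ i : Fin 5, ∃ a, f i = Sum.inr a := by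
      intro i
      have := hall i
      rw [h0] at this
      cases hfi : f i
      · rw [hfi] at this; simp at this
      · exact ⟨_, rfl⟩
    choose g hg using hex
    apply hH
    refine ⟨⟨g, fun i j hij => f.injective (by rw [hg i, hg j, hij])⟩, ?_⟩
    intro i j
    have := hf i j
    rw [hg i, hg j] at this
    exact (by simpa [SimpleGraph.sum_adj] using this : H.Adj (g i) (g j) ↔ _)

lemma noC5_cluster {V : Type*} {G : SimpleGraph V} (p : V → ℕ)
    (h : ∀ u v, G.Adj u v ↔ u ≠ v ∧ p u = p v) : ¬ HasInducedC5 G := by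
  rintro ⟨f, hf⟩
  have h01 := (h _ _).mp ((hf 0 1).mpr (by decide))
  have h12 := (h _ _).mp ((hf 1 2).mpr (by decide))
  have h02 : ¬ G.Adj (f 0) (f 2) := fun hc => (by decide : ¬ (cycleGraph 5).Adj 0 2) ((hf 0 2).mp hc)
  apply h02
  rw [h]
  exact ⟨fun he => (by decide : (0:Fin 5) ≠ 2) (f.injective he), h01.2.trans h12.2⟩


lemma deg_bot {V : Type*} (v : V) : deg (⊥ : SimpleGraph V) v = 0 := by
  simp [deg, neighborSet]

lemma deg_compl {n : ℕ} (G : SimpleGraph (Fin n)) (v : Fin n) :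
    deg Gᶜ v = n - 1 - deg G v := by
  have hns : Gᶜ.neighborSet v = (insert v (G.neighborSet v))ᶜ := by
    ext x
    simp only [mem_neighborSet, compl_adj, Set.mem_compl_iff, Set.mem_insert_iff]
    constructor
    · rintro ⟨hne, hna⟩ (h | h)
      · exact hne h.symm
      · exact hna h
    · intro h
      push_neg at h
      exact ⟨fun he => h.1 he.symm, h.2⟩
  have hfin : (insert v (G.neighborSet v)).Finite := Set.toFinite _
  have hcompl := Set.ncard_add_ncard_compl (insert v (G.neighborSet v))
  have hins : (insert v (G.neighborSet v)).ncard = deg G v + 1 := by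
    rw [Set.ncard_insert_of_notMem (by simp)]
    simp [deg, Nat.card_coe_set_eq]
  have : deg Gᶜ v = (insert v (G.neighborSet v))ᶜ.ncard := by
    rw [deg, hns, Nat.card_coe_set_eq]
  rw [this]
  have hcard : Nat.card (Fin n) = n := by simp
  omega

lemma deg_sum_inl {V W : Type*} (G : SimpleGraph V) (H : SimpleGraph W) (v : V) :
    deg (G ⊕g H) (Sum.inl v) = deg G v := by
  have : (G ⊕g H).neighborSet (Sum.inl v) = Sum.inl '' (G.neighborSet v) := by
    ext x
    cases x <;> simp [mem_neighborSet, SimpleGraph.sum_adj]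
  rw [deg, this, Nat.card_image_of_injective Sum.inl_injective]
  rfl

lemma deg_sum_inr {V W : Type*} (G : SimpleGraph V) (H : SimpleGraph W) (v : W) :
    deg (G ⊕g H) (Sum.inr v) = deg H v := by
  have : (G ⊕g H).neighborSet (Sum.inr v) = Sum.inr '' (H.neighborSet v) := by
    ext x
    cases x <;> simp [mem_neighborSet, SimpleGraph.sum_adj]
  rw [deg, this, Nat.card_image_of_injective Sum.inr_injective]
  rfl

lemma deg_comap {V W : Type*} (e : V ≃ W) (G : SimpleGraph W) (v : V) :
    deg (G.comap e) v = deg G (e v) := by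
  have : (G.comap e).neighborSet v = e ⁻¹' (G.neighborSet (e v)) := by
    ext x; simp [mem_neighborSet]
  rw [deg, this, ← Equiv.image_symm_eq_preimage, Nat.card_image_of_injective e.symm.injective]
  rfl

lemma noC5_comap {V W : Type*} (e : V ≃ W) {G : SimpleGraph W} (h : ¬ HasInducedC5 G) :
    ¬ HasInducedC5 (G.comap e) := by
  rintro ⟨f, hf⟩
  exact h ⟨f.trans e.toEmbedding, hf⟩


def matchG (m : ℕ) : SimpleGraph (Fin m) where
  Adj u v := u ≠ v ∧ (u : ℕ) / 2 = (v : ℕ) / 2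
  symm := ⟨by rintro u v ⟨h1, h2⟩; exact ⟨h1.symm, h2.symm⟩⟩
  loopless := ⟨by rintro v ⟨h, _⟩; exact h rfl⟩

lemma matchG_adj {m : ℕ} (u v : Fin m) :
    (matchG m).Adj u v ↔ u ≠ v ∧ (u : ℕ) / 2 = (v : ℕ) / 2 := Iff.rfl

lemma matchG_deg_one {m : ℕ} (v : Fin m) (h : (v : ℕ) / 2 * 2 + 1 < m) :
    deg (matchG m) v = 1 := by
  have hq : (v : ℕ) / 2 * 2 + 1 - (v : ℕ) % 2 < m := by omega
  have hset : (matchG m).neighborSet v = {⟨(v : ℕ) / 2 * 2 + 1 - (v : ℕ) % 2, hq⟩} := by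
    ext u
    simp only [mem_neighborSet, matchG_adj, Set.mem_singleton_iff, Fin.ext_iff, Ne]
    have hu := u.isLt
    have hv := v.isLt
    constructor
    · rintro ⟨h1, h2⟩; omega
    · intro h1; exact ⟨by omega, by omega⟩
  rw [deg, hset]
  simp

lemma matchG_deg_zero {m : ℕ} (v : Fin m) (h : (v : ℕ) % 2 = 0) (h2 : (v : ℕ) + 1 = m) :
    deg (matchG m) v = 0 := by
  have hset : (matchG m).neighborSet v = ∅ := by
    ext u
    simp only [mem_neighborSet, matchG_adj, Set.mem_empty_iff_false, iff_false, not_and, Ne]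
    intro h1
    have hu := u.isLt
    omega
  rw [deg, hset]
  simp



def Good {V : Type*} (c : ℕ) (G : SimpleGraph V) : Prop :=
  ¬ HasInducedC5 G ∧ ∀ v, deg G v = c

lemma good_sum_fin {a b c : ℕ} (hG : ∃ G : SimpleGraph (Fin a), Good c G)
    (hH : ∃ H : SimpleGraph (Fin b), Good c H) :
    ∃ K : SimpleGraph (Fin (a + b)), Good c K := by
  obtain ⟨G, hG1, hG2⟩ := hG
  obtain ⟨H, hH1, hH2⟩ := hH
  refine ⟨(G ⊕g H).comap finSumFinEquiv.symm, noC5_comap _ (noC5_sum hG1 hH1), ?_⟩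
  intro v
  rw [deg_comap]
  rcases h : finSumFinEquiv.symm v with x | x
  · rw [deg_sum_inl]; exact hG2 x
  · rw [deg_sum_inr]; exact hH2 x

lemma good_compl {h c : ℕ} (hG : ∃ G : SimpleGraph (Fin h), Good c G) :
    ∃ K : SimpleGraph (Fin h), Good (h - 1 - c) K := by
  obtain ⟨G, hG1, hG2⟩ := hG
  exact ⟨Gᶜ, noC5_compl hG1, fun v => by rw [deg_compl, hG2]⟩

lemma main_reg : ∀ N c h : ℕ, c + h ≤ N → c + 1 ≤ h → Even (c * h) → h ≠ 2 * c + 1 →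
    ∃ G : SimpleGraph (Fin h), Good c G := by
  intro N
  induction N with
  | zero => intro c h h1 h2 _ _; omega
  | succ N ih =>
    intro c h hN hch hpar hne
    rcases Nat.eq_zero_or_pos c with rfl | hc
    · exact ⟨⊥, noC5_bot, fun v => deg_bot v⟩
    rw [Nat.even_mul] at hpar
    rcases le_or_gt h (2 * c) with hle | hgt
    · -- complement case
      have hrec := ih (h - 1 - c) h (by omega) (by omega)
        (by
          rw [Nat.even_mul]
          rcases hpar with hc' | hh'
          · rcases Nat.even_or_odd h with hh | hh
            · exact Or.inr hh
            · left
              rw [Nat.even_iff] at hc' ⊢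
              rw [Nat.odd_iff] at hh
              omega
          · exact Or.inr hh')
        (by omega)
      have := good_compl hrec
      rwa [show h - 1 - (h - 1 - c) = c by omega] at this
    · -- h ≥ 2c + 2
      have h22 : 2 * c + 2 ≤ h := by omega
      by_cases h32 : h = 3 * c + 2
      · have hceven : Even c := by
          rcases hpar with hc' | hh'
          · exact hc'
          · rw [Nat.even_iff] at hh' ⊢; omega
        have hc2 : c % 2 = 0 := Nat.even_iff.mp hceven
        have p1 := ih c (c + 2) (by omega) (by omega)
          (by rw [Nat.even_mul]; exact Or.inl hceven) (by omega)
        have p2 := ih c (2 * c) (by omega) (by omega)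
          (by rw [Nat.even_mul]; exact Or.inl hceven) (by omega)
        have := good_sum_fin p1 p2
        rwa [show (c + 2) + 2 * c = h by omega] at this
      · have hbpar : Even (c * (h - c - 1)) := by
          rw [Nat.even_mul]
          rcases Nat.even_or_odd c with hc' | hc'
          · exact Or.inl hc'
          · right
            rcases hpar with hc2 | hh'
            · exact absurd hc2 (by simpa using Nat.not_even_iff_odd.mpr hc')
            · rw [Nat.even_iff] at hh' ⊢
              rw [Nat.odd_iff] at hc'
              omega
        have p1 := ih c (c + 1) (by omega) (by omega)
          (by simpa using (Nat.even_mul_succ_self c)) (by omega)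
        have p2 := ih c (h - c - 1) (by omega) (by omega) hbpar (by omega)
        have := good_sum_fin p1 p2
        rwa [show (c + 1) + (h - c - 1) = h by omega] at this


lemma top_construct (n d : ℕ) (hd2 : d % 2 = 1) (hn2 : n % 2 = 1) (h3 : 2 * d + 3 ≤ n) :
    ∃ G : SimpleGraph (Fin n), ¬ HasInducedC5 G ∧
      ∃ w : Fin n, (∀ v, v ≠ w → deg G v = d) ∧ deg G w = d + 1 := by
  set M := n - (d + 2) with hM
  have hMpar : M % 2 = 0 := by omega
  obtain ⟨R, hR1, hR2⟩ := main_reg (d + M) d M (le_refl _) (by omega)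
    (by rw [Nat.even_mul]; right; rw [Nat.even_iff]; omega) (by omega)
  have hspec : ¬ HasInducedC5 ((matchG (d + 2))ᶜ) :=
    noC5_compl (noC5_cluster (fun v => (v : ℕ) / 2) (fun u v => Iff.rfl))
  have key : ∃ G : SimpleGraph (Fin ((d + 2) + M)), ¬ HasInducedC5 G ∧
      ∃ w, (∀ v, v ≠ w → deg G v = d) ∧ deg G w = d + 1 := by
    refine ⟨((matchG (d + 2))ᶜ ⊕g R).comap finSumFinEquiv.symm,
      noC5_comap _ (noC5_sum hspec hR1), finSumFinEquiv (Sum.inl ⟨d + 1, by omega⟩), ?_, ?_⟩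
    · intro v hv
      rw [deg_comap]
      rcases h : finSumFinEquiv.symm v with x | x
      · have hvx : v = finSumFinEquiv (Sum.inl x) := by
          rw [← h, Equiv.apply_symm_apply]
        have hxne : x ≠ ⟨d + 1, by omega⟩ := by
          intro hc; exact hv (by rw [hvx, hc])
        have hxval : (x : ℕ) ≠ d + 1 := fun hc => hxne (Fin.ext hc)
        have hxlt := x.isLt
        rw [deg_sum_inl, deg_compl, matchG_deg_one x (by omega)]
        omega
      · rw [deg_sum_inr]; exact hR2 x
    · rw [deg_comap, Equiv.symm_apply_apply, deg_sum_inl, deg_compl,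
        matchG_deg_zero _ (by simp; omega) (by simp)]
      omega
  rwa [show (d + 2) + M = n by omega] at key

/-- For every `n ≡ 3 (mod 4)` and odd `d` with `1 ≤ d ≤ n−1`, `d ≠ (n−1)/2`,
there is an almost `d`-regular graph on `n` vertices with no induced 5-cycle:
all vertices but one have degree `d`, and the remaining vertex has
degree `d+1` or `d−1`. -/
theorem stmt_16 (n d : ℕ) (hn : n % 4 = 3) (hd : Odd d) (hd1 : 1 ≤ d)
    (hdn : d ≤ n - 1) (hne : d ≠ (n - 1) / 2) :
    ∃ G : SimpleGraph (Fin n), ¬ HasInducedC5 G ∧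
      ∃ w : Fin n, (∀ v, v ≠ w → deg G v = d) ∧
        (deg G w = d + 1 ∨ deg G w = d - 1) := by
  have hn2 : n % 2 = 1 := by omega
  have hd2 : d % 2 = 1 := Nat.odd_iff.mp hd
  rcases le_or_gt (2 * d + 3) n with hcase | hcase
  · obtain ⟨G, hG1, w, hw1, hw2⟩ := top_construct n d hd2 hn2 hcase
    exact ⟨G, hG1, w, hw1, Or.inl hw2⟩
  · have hd' : 2 * (n - 1 - d) + 3 ≤ n := by omega
    have hd2' : (n - 1 - d) % 2 = 1 := by omega
    obtain ⟨G, hG1, w, hw1, hw2⟩ := top_construct n (n - 1 - d) hd2' hn2 hd'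
    refine ⟨Gᶜ, noC5_compl hG1, w, ?_, ?_⟩
    · intro v hv
      rw [deg_compl, hw1 v hv]
      omega
    · right
      rw [deg_compl, hw2]
      omega
end

section
/- There exists a graph on 27 vertices with no induced 5-cycle in which 24 vertices have degree 13 and three vertices have degree 12. -/
/-- block of a vertex -/
def blk (v : ℕ) : ℕ :=
  if v < 4 then 0 else if v < 7 then 1 else if v < 9 then 2 else if v < 13 then 3
  else if v < 15 then 4 else if v < 18 then 5 else if v < 22 then 6
  else if v < 25 then 7 else 8

/-- whether a block is a clique -/
def cl (p : ℕ) : Bool := p == 1 || p == 2 || p == 5 || p == 7 || p == 8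

/-- template (rook's graph K3□K3) adjacency on blocks -/
def tadj (p q : ℕ) : Bool := (p != q) && (p / 3 == q / 3 || p % 3 == q % 3)

def adjB (a b : ℕ) : Bool :=
  (blk a == blk b && a != b && cl (blk a)) || tadj (blk a) (blk b)

lemma adjB_symm : ∀ u v : Fin 27, adjB u.val v.val = adjB v.val u.val := by decide

lemma adjB_irrefl : ∀ v : Fin 27, adjB v.val v.val = false := by decide

def myG : SimpleGraph (Fin 27) where
  Adj u v := adjB u.val v.val = true
  symm := ⟨fun u v h => (adjB_symm v u).trans h⟩
  loopless := ⟨fun (v : Fin 27) h => by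
    have h' : adjB v.val v.val = true := h
    rw [adjB_irrefl] at h'
    exact Bool.false_ne_true h'⟩

instance : DecidableRel myG.Adj := fun u v => inferInstanceAs (Decidable (_ = true))

lemma tadj_self (p : ℕ) : tadj p p = false := by simp [tadj]

lemma twin {u w : Fin 27} (h : blk u.val ≠ blk w.val) :
    myG.Adj u w ↔ tadj (blk u.val) (blk w.val) = true := by
  show adjB u.val w.val = true ↔ _
  simp [adjB, h]

lemma blk_lt (v : Fin 27) : blk v.val < 9 := by
  revert v; decide

lemma key_s18 : ∀ i j : Fin 5, i ≠ j → ∃ k : Fin 5, k ≠ i ∧ k ≠ j ∧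
    (SimpleGraph.cycleGraph 5).Adj i k ∧ ¬ (SimpleGraph.cycleGraph 5).Adj j k := by
  decide

lemma tadj_iff {p q : ℕ} : tadj p q = true ↔ p ≠ q ∧ (p / 3 = q / 3 ∨ p % 3 = q % 3) := by
  simp [tadj]

lemma no_template_c5 : ¬ ∃ g : Fin 5 → Fin 9,
    (∀ i j, i ≠ j → g i ≠ g j) ∧
    (∀ i j, tadj (g i).val (g j).val = true ↔ (SimpleGraph.cycleGraph 5).Adj i j) := by
  rintro ⟨g, hinj, hadj⟩
  have hne : ∀ i j : Fin 5, i ≠ j → (g i).val ≠ (g j).val := fun i j hij h =>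
    hinj i j hij (Fin.ext h)
  have step : ∀ i j k : Fin 5, (SimpleGraph.cycleGraph 5).Adj i j →
      (SimpleGraph.cycleGraph 5).Adj j k → ¬ (SimpleGraph.cycleGraph 5).Adj i k → i ≠ k →
      ((g i).val / 3 = (g j).val / 3 ↔ ¬ ((g j).val / 3 = (g k).val / 3)) := by
    intro i j k hij hjk hik hik'
    have e1 := (tadj_iff.mp ((hadj i j).mpr hij)).2
    have e2 := (tadj_iff.mp ((hadj j k).mpr hjk)).2
    have e3 : ¬ ((g i).val / 3 = (g k).val / 3 ∨ (g i).val % 3 = (g k).val % 3) := by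
      intro h
      exact hik ((hadj i k).mp (tadj_iff.mpr ⟨hne i k hik', h⟩))
    constructor
    · intro h1 h2
      exact e3 (Or.inl (h1.trans h2))
    · intro h2
      rcases e1 with h1 | h1
      · exact h1
      · rcases e2 with h2' | h2'
        · exact absurd h2' h2
        · exact absurd (Or.inr (h1.trans h2')) e3
  have a01 : (SimpleGraph.cycleGraph 5).Adj 0 1 := by decide
  have a12 : (SimpleGraph.cycleGraph 5).Adj 1 2 := by decide
  have a23 : (SimpleGraph.cycleGraph 5).Adj 2 3 := by decide
  have a34 : (SimpleGraph.cycleGraph 5).Adj 3 4 := by decide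
  have a40 : (SimpleGraph.cycleGraph 5).Adj 4 0 := by decide
  have n02 : ¬ (SimpleGraph.cycleGraph 5).Adj 0 2 := by decide
  have n13 : ¬ (SimpleGraph.cycleGraph 5).Adj 1 3 := by decide
  have n24 : ¬ (SimpleGraph.cycleGraph 5).Adj 2 4 := by decide
  have n30 : ¬ (SimpleGraph.cycleGraph 5).Adj 3 0 := by decide
  have n41 : ¬ (SimpleGraph.cycleGraph 5).Adj 4 1 := by decide
  have h0 := step 0 1 2 a01 a12 n02 (by decide)
  have h1 := step 1 2 3 a12 a23 n13 (by decide)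
  have h2 := step 2 3 4 a23 a34 n24 (by decide)
  have h3 := step 3 4 0 a34 a40 n30 (by decide)
  have h4 := step 4 0 1 a40 a01 n41 (by decide)
  tauto

lemma noC5 : ¬ HasInducedC5 myG := by
  rintro ⟨f, hf⟩
  -- all five vertices lie in distinct blocks
  have hdist : ∀ i j : Fin 5, i ≠ j → blk (f i).val ≠ blk (f j).val := by
    intro i j hij hbe
    obtain ⟨k, hki, hkj, hik, hjk⟩ := key_s18 i j hij
    have hGik : myG.Adj (f i) (f k) := (hf i k).mpr hik
    have hGjk : ¬ myG.Adj (f j) (f k) := fun h => hjk ((hf j k).mp h)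
    by_cases hbk : blk (f i).val = blk (f k).val
    · -- clique case
      have hcl : cl (blk (f i).val) = true := by
        have : adjB (f i).val (f k).val = true := hGik
        simp only [adjB, Bool.or_eq_true, Bool.and_eq_true, beq_iff_eq] at this
        rcases this with ⟨⟨_, _⟩, h⟩ | h
        · exact h
        · rw [hbk, tadj_self] at h; exact absurd h (by simp)
      apply hGjk
      show adjB (f j).val (f k).val = true
      have hne : (f j).val ≠ (f k).val := by
        intro h
        exact hkj (f.injective (Fin.ext h)).symm
      simp only [adjB, Bool.or_eq_true, Bool.and_eq_true, beq_iff_eq, bne_iff_ne, ne_eq]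
      exact Or.inl ⟨⟨hbe ▸ hbk, hne⟩, (hbe ▸ hcl : _)⟩
    · -- twin case
      apply hGjk
      rw [twin (hbe ▸ hbk)]
      rw [← hbe]
      exact (twin hbk).mp hGik
  -- project to template
  apply no_template_c5
  refine ⟨fun i => ⟨blk (f i).val, blk_lt _⟩, ?_, ?_⟩
  · intro i j hij h
    exact hdist i j hij (congrArg Fin.val h)
  · intro i j
    by_cases hij : i = j
    · subst hij
      simp [tadj_self, SimpleGraph.irrefl]
    · rw [← twin (hdist i j hij)]
      exact hf i j

lemma deg_eq (v : Fin 27) : deg myG v = myG.degree v := by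
  rw [deg, Nat.card_eq_fintype_card, SimpleGraph.card_neighborSet_eq_degree]

/-- There is a 27-vertex graph with no induced 5-cycle in which 24 vertices
have degree 13 and three vertices have degree 12. -/
theorem stmt_18 :
    ∃ G : SimpleGraph (Fin 27), ¬ HasInducedC5 G ∧
      Nat.card {v : Fin 27 // deg G v = 13} = 24 ∧
      Nat.card {v : Fin 27 // deg G v = 12} = 3 := by
  refine ⟨myG, noC5, ?_, ?_⟩
  · rw [Nat.card_congr (Equiv.subtypeEquivRight (fun v => by rw [deg_eq])),
      Nat.card_eq_fintype_card]
    show Fintype.card {v : Fin 27 // myG.degree v = 13} = 24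
    decide
  · rw [Nat.card_congr (Equiv.subtypeEquivRight (fun v => by rw [deg_eq])),
      Nat.card_eq_fintype_card]
    show Fintype.card {v : Fin 27 // myG.degree v = 12} = 3
    decide
end
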